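/- For an integer d ≥ 1 and p = 5, write T₁ = θ^{(5,d)}_{0,0}, T₂ = θ^{(5,d)}_{1,0}, T₃ = θ^{(5,d)}_{0,1}, T₄ = θ^{(5,d)}_{1,1}, T₅ = θ^{(5,d)}_{0,2}, T₆ = θ^{(5,d)}_{2,0}, T₇ = θ^{(5,d)}_{2,1}, T₈ = θ^{(5,d)}_{1,2}, T₉ = θ^{(5,d)}_{1,3}. Let P₁ = T₁² + 4T₁T₃ + 4T₃² + 4T₁T₅ + 8T₃T₅ + 4T₅² and P₂ = T₁² + 8T₃T₅ + 4T₂T₆ + 8T₄T₈ + 4T₇T₉ (which come from distinct symmetric weight enumerator polynomials). Then for d = 5 (level ℓ = 19) one has P₁ = P₂ in ℤ[[q]], while for d = 10 (level ℓ = 39) one has P₁ ≠ P₂. -/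

import Mathlib

noncomputable section

/-- The positive definite quadratic form `Q_d(x,y) = x² + xy + d y²`. -/
def Qform (d : ℕ) (x y : ℤ) : ℤ := x ^ 2 + x * y + (d : ℤ) * y ^ 2

/-- The coset theta series `θ^{(p,d)}_{a,b}`. -/
def cosetTheta (p d : ℕ) (a b : ℤ) : PowerSeries ℤ :=
  PowerSeries.mk fun k =>
    (Set.ncard {mn : ℤ × ℤ |
      Qform d ((p : ℤ) * mn.1 + a) ((p : ℤ) * mn.2 + b) = (k : ℤ)} : ℤ)

/-- The nine coset theta series for `p = 5`:
`T₁ = θ_{0,0}, T₂ = θ_{1,0}, T₃ = θ_{0,1}, T₄ = θ_{1,1}, T₅ = θ_{0,2},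
T₆ = θ_{2,0}, T₇ = θ_{2,1}, T₈ = θ_{1,2}, T₉ = θ_{1,3}`. -/
def T5 (d : ℕ) : Fin 9 → PowerSeries ℤ :=
  ![cosetTheta 5 d 0 0, cosetTheta 5 d 1 0, cosetTheta 5 d 0 1, cosetTheta 5 d 1 1,
    cosetTheta 5 d 0 2, cosetTheta 5 d 2 0, cosetTheta 5 d 2 1, cosetTheta 5 d 1 2,
    cosetTheta 5 d 1 3]

open MvPolynomial in
/-- `P₁ = T₁² + 4T₁T₃ + 4T₃² + 4T₁T₅ + 8T₃T₅ + 4T₅²` as a polynomial. -/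
def P1 : MvPolynomial (Fin 9) ℤ :=
  X 0 ^ 2 + 4 * X 0 * X 2 + 4 * X 2 ^ 2 + 4 * X 0 * X 4 + 8 * X 2 * X 4 + 4 * X 4 ^ 2

open MvPolynomial in
/-- `P₂ = T₁² + 8T₃T₅ + 4T₂T₆ + 8T₄T₈ + 4T₇T₉` as a polynomial. -/
def P2 : MvPolynomial (Fin 9) ℤ :=
  X 0 ^ 2 + 8 * X 2 * X 4 + 4 * X 1 * X 5 + 8 * X 3 * X 7 + 4 * X 6 * X 8

namespace Aux
open Set PowerSeries Function

variable {α β ι : Type*}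

def levelSet (f : α → ℤ) (k : ℕ) : Set α := {v | f v = (k : ℤ)}

def thetaOf (f : α → ℤ) : PowerSeries ℤ :=
  PowerSeries.mk fun k => ((levelSet f k).ncard : ℤ)

lemma cosetTheta_eq (p d : ℕ) (a b : ℤ) (f : ℤ × ℤ → ℤ)
    (hf : f = fun mn => Qform d ((p : ℤ) * mn.1 + a) ((p : ℤ) * mn.2 + b)) :
    thetaOf f = cosetTheta p d a b := by
  subst hf; rfl

lemma ncard_congr_im (f : α → β) (hf : Function.Injective f) {s : Set α} {t : Set β}
    (h : f '' s = t) : t.ncard = s.ncard := by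
  rw [← h, Set.ncard_image_of_injective _ hf]

lemma ncard_prod (s : Set α) (t : Set β) : (s ×ˢ t).ncard = s.ncard * t.ncard := by
  rw [← Nat.card_coe_set_eq, Nat.card_congr (Equiv.Set.prod s t), Nat.card_prod,
    Nat.card_coe_set_eq, Nat.card_coe_set_eq]

lemma ncard_biUnion (s : Finset ι) (F : ι → Set α)
    (hfin : ∀ i ∈ s, (F i).Finite)
    (hdisj : ∀ i ∈ s, ∀ j ∈ s, i ≠ j → Disjoint (F i) (F j)) :
    (⋃ i ∈ s, F i).ncard = ∑ i ∈ s, (F i).ncard := by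
  classical
  induction s using Finset.induction with
  | empty => simp
  | @insert a s' hx ih =>
    have hf1 : (F a).Finite := hfin a (Finset.mem_insert_self a s')
    have hf2 : (⋃ x ∈ s', F x).Finite := by
      apply Set.Finite.biUnion s'.finite_toSet
      intro i hi; exact hfin i (Finset.mem_insert_of_mem hi)
    have hd : Disjoint (F a) (⋃ x ∈ s', F x) := by
      apply Set.disjoint_iUnion₂_right.mpr
      intro i hi
      exact hdisj a (Finset.mem_insert_self a s') i (Finset.mem_insert_of_mem hi)
        (fun h => hx (h ▸ hi))
    rw [Finset.set_biUnion_insert, Finset.sum_insert hx,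
      Set.ncard_union_eq hd hf1 hf2,
      ih (fun i hi => hfin i (Finset.mem_insert_of_mem hi))
        (fun i hi j hj hij => hdisj i (Finset.mem_insert_of_mem hi) j
          (Finset.mem_insert_of_mem hj) hij)]

end Aux

namespace Aux
open Set PowerSeries Function

variable {α β : Type*}

lemma Qform_nonneg {d : ℕ} (hd : 1 ≤ d) (x y : ℤ) : 0 ≤ Qform d x y := by
  have hd' : (1 : ℤ) ≤ (d : ℤ) := by exact_mod_cast hd
  have h := sq_nonneg (2 * x + y)
  have h2 := sq_nonneg y
  unfold Qform
  nlinarith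

lemma Qlevel_finite {d : ℕ} (hd : 1 ≤ d) (k : ℕ) :
    {v : ℤ × ℤ | Qform d v.1 v.2 = (k : ℤ)}.Finite := by
  have hd' : (1 : ℤ) ≤ (d : ℤ) := by exact_mod_cast hd
  apply Set.Finite.subset (Set.finite_Icc ((-(2 * (k:ℤ)), -(2 * (k:ℤ))) : ℤ × ℤ)
    ((2 * (k:ℤ), 2 * (k:ℤ)) : ℤ × ℤ))
  rintro ⟨x, y⟩ h
  simp only [Set.mem_setOf_eq] at h
  unfold Qform at h
  have hk : (0:ℤ) ≤ (k:ℤ) := Int.natCast_nonneg k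
  have h4 : (2*x+y)^2 + (4*(d:ℤ) - 1) * y^2 = 4 * (k:ℤ) := by linarith [h]; 
  have hy2 : y^2 ≤ 4 * (k:ℤ) := by nlinarith [sq_nonneg (2*x+y), sq_nonneg y]
  have hxy2 : (2*x+y)^2 ≤ 4 * (k:ℤ) := by nlinarith [sq_nonneg y]
  have hy : -(2*(k:ℤ)) ≤ y ∧ y ≤ 2*(k:ℤ) := by
    constructor <;> nlinarith [sq_nonneg (y - 2*(k:ℤ)), sq_nonneg (y + 2*(k:ℤ))]
  have hxy : -(2*(k:ℤ)) ≤ 2*x+y ∧ 2*x+y ≤ 2*(k:ℤ) := by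
    constructor <;> nlinarith [sq_nonneg (2*x+y - 2*(k:ℤ)), sq_nonneg (2*x+y + 2*(k:ℤ))]
  simp only [Set.mem_Icc, Prod.mk_le_mk]
  refine ⟨⟨?_, ?_⟩, ?_, ?_⟩ <;> omega

lemma affine_level_finite {d : ℕ} (hd : 1 ≤ d) {c1 c2 : ℤ} (hc1 : c1 ≠ 0) (hc2 : c2 ≠ 0)
    (a b : ℤ) (k : ℕ) :
    {mn : ℤ × ℤ | Qform d (c1 * mn.1 + a) (c2 * mn.2 + b) = (k : ℤ)}.Finite := by
  have : {mn : ℤ × ℤ | Qform d (c1 * mn.1 + a) (c2 * mn.2 + b) = (k : ℤ)} =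
      (fun mn : ℤ × ℤ => (c1 * mn.1 + a, c2 * mn.2 + b)) ⁻¹'
        {v : ℤ × ℤ | Qform d v.1 v.2 = (k : ℤ)} := rfl
  rw [this]
  apply Set.Finite.preimage _ (Qlevel_finite hd k)
  intro u _ v _ h
  simp only [Prod.mk.injEq] at h
  have h1 : u.1 = v.1 := by
    rcases h with ⟨h1, h2⟩
    exact mul_left_cancel₀ hc1 (by linarith)
  have h2 : u.2 = v.2 := by
    rcases h with ⟨h1, h2⟩
    exact mul_left_cancel₀ hc2 (by linarith)
  exact Prod.ext h1 h2

lemma sum_level_eq (f g : α → ℤ) (hf0 : ∀ v, 0 ≤ f v) (hg0 : ∀ v, 0 ≤ g v) (k : ℕ) :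
    {w : α × α | f w.1 + g w.2 = (k : ℤ)} =
      ⋃ p ∈ Finset.HasAntidiagonal.antidiagonal k, (levelSet f p.1 ×ˢ levelSet g p.2) := by
  ext w
  simp only [Set.mem_setOf_eq, Set.mem_iUnion, Finset.HasAntidiagonal.mem_antidiagonal, Set.mem_prod]
  constructor
  · intro h
    refine ⟨((f w.1).toNat, (g w.2).toNat), ?_, ?_, ?_⟩
    · have := hf0 w.1; have := hg0 w.2; omega
    · simp only [levelSet, Set.mem_setOf_eq]; have := hf0 w.1; omega
    · simp only [levelSet, Set.mem_setOf_eq]; have := hg0 w.2; omega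
  · rintro ⟨⟨i, j⟩, hij, h1, h2⟩
    simp only [levelSet, Set.mem_setOf_eq] at h1 h2
    rw [h1, h2]
    exact_mod_cast congrArg (Nat.cast : ℕ → ℤ) hij

lemma sum_level_finite (f g : α → ℤ) (hf0 : ∀ v, 0 ≤ f v) (hg0 : ∀ v, 0 ≤ g v)
    (hff : ∀ k : ℕ, (levelSet f k).Finite) (hgf : ∀ k : ℕ, (levelSet g k).Finite) (k : ℕ) :
    {w : α × α | f w.1 + g w.2 = (k : ℤ)}.Finite := by
  rw [sum_level_eq f g hf0 hg0 k]
  apply Set.Finite.biUnion (Finset.HasAntidiagonal.antidiagonal k).finite_toSet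
  intro p _
  exact Set.Finite.prod (hff p.1) (hgf p.2)

lemma theta_mul (f g : α → ℤ) (hf0 : ∀ v, 0 ≤ f v) (hg0 : ∀ v, 0 ≤ g v)
    (hff : ∀ k : ℕ, (levelSet f k).Finite) (hgf : ∀ k : ℕ, (levelSet g k).Finite) :
    thetaOf f * thetaOf g = thetaOf (fun w : α × α => f w.1 + g w.2) := by
  ext k
  rw [PowerSeries.coeff_mul]
  simp only [thetaOf, PowerSeries.coeff_mk]
  have hset : levelSet (fun w : α × α => f w.1 + g w.2) k =
      ⋃ p ∈ Finset.HasAntidiagonal.antidiagonal k, (levelSet f p.1 ×ˢ levelSet g p.2) :=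
    sum_level_eq f g hf0 hg0 k
  rw [hset, ncard_biUnion]
  · push_cast
    apply Finset.sum_congr rfl
    intro p _
    rw [ncard_prod]
    push_cast
    ring
  · intro p _; exact Set.Finite.prod (hff p.1) (hgf p.2)
  · intro p _ q _ hpq
    rw [Set.disjoint_left]
    rintro w ⟨hw1, hw2⟩ ⟨hw1', hw2'⟩
    simp only [levelSet, Set.mem_setOf_eq] at hw1 hw2 hw1' hw2'
    apply hpq
    have e1 : (p.1 : ℤ) = (q.1 : ℤ) := by rw [← hw1, ← hw1']
    have e2 : (p.2 : ℤ) = (q.2 : ℤ) := by rw [← hw2, ← hw2']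
    exact Prod.ext (by exact_mod_cast e1) (by exact_mod_cast e2)

end Aux
namespace Aux
open Set

lemma coset_eq_of_bij {p d : ℕ} {a b a' b' : ℤ} (f : ℤ × ℤ → ℤ × ℤ)
    (hinj : Function.Injective f)
    (hfwd : ∀ mn : ℤ × ℤ, Qform d ((p:ℤ) * (f mn).1 + a') ((p:ℤ) * (f mn).2 + b') =
      Qform d ((p:ℤ) * mn.1 + a) ((p:ℤ) * mn.2 + b))
    (hsurj : Function.Surjective f) :
    cosetTheta p d a b = cosetTheta p d a' b' := by
  ext k
  unfold cosetTheta
  rw [PowerSeries.coeff_mk, PowerSeries.coeff_mk]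
  congr 1
  apply (ncard_congr_im f hinj ?_).symm
  ext v
  constructor
  · rintro ⟨w, hw, rfl⟩
    simp only [Set.mem_setOf_eq] at hw ⊢
    rw [hfwd w]; exact hw
  · intro hv
    obtain ⟨w, rfl⟩ := hsurj v
    refine ⟨w, ?_, rfl⟩
    simp only [Set.mem_setOf_eq] at hv ⊢
    rw [← hfwd w]; exact hv

lemma negg (d : ℕ) (a b : ℤ) : cosetTheta 5 d a b = cosetTheta 5 d (-a) (-b) := by
  apply coset_eq_of_bij (fun mn => (-mn.1, -mn.2))
  · intro u v h; simp only [Prod.mk.injEq] at h; exact Prod.ext (by omega) (by omega)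
  · intro mn; unfold Qform; push_cast; ring
  · intro v; exact ⟨(-v.1, -v.2), by simp⟩

lemma shear (d : ℕ) (a b : ℤ) : cosetTheta 5 d a b = cosetTheta 5 d (a + b) (-b) := by
  apply coset_eq_of_bij (fun mn => (mn.1 + mn.2, -mn.2))
  · intro u v h; simp only [Prod.mk.injEq] at h; exact Prod.ext (by omega) (by omega)
  · intro mn; unfold Qform; push_cast; ring
  · intro v; exact ⟨(v.1 + v.2, -v.2), by simp⟩

lemma translate (d : ℕ) (a b a' b' s t : ℤ) (ha : a = a' + 5 * s) (hb : b = b' + 5 * t) :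
    cosetTheta 5 d a b = cosetTheta 5 d a' b' := by
  apply coset_eq_of_bij (fun mn => (mn.1 + s, mn.2 + t))
  · intro u v h; simp only [Prod.mk.injEq] at h; exact Prod.ext (by omega) (by omega)
  · intro mn; subst ha hb; unfold Qform; push_cast; ring
  · intro v; exact ⟨(v.1 - s, v.2 - t), by simp⟩

end Aux
namespace Aux
open Set

/-- canonical coset function -/
def cfun (d : ℕ) (a b : ℤ) : ℤ × ℤ → ℤ :=
  fun mn => Qform d (((5:ℕ):ℤ) * mn.1 + a) (((5:ℕ):ℤ) * mn.2 + b)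

lemma thetaOf_cfun (d : ℕ) (a b : ℤ) : thetaOf (cfun d a b) = cosetTheta 5 d a b := rfl

lemma cfun_nonneg {d : ℕ} (hd : 1 ≤ d) (a b : ℤ) (mn : ℤ × ℤ) : 0 ≤ cfun d a b mn :=
  Qform_nonneg hd _ _

lemma cfun_finite {d : ℕ} (hd : 1 ≤ d) (a b : ℤ) (k : ℕ) : (levelSet (cfun d a b) k).Finite :=
  affine_level_finite hd (by norm_num) (by norm_num) a b k

/-- the 2-dim lattice x ≡ 0 mod 5 -/
def f1 (d : ℕ) : ℤ × ℤ → ℤ := fun v => Qform d (((5:ℕ):ℤ) * v.1 + 0) (1 * v.2 + 0)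

lemma f1_nonneg {d : ℕ} (hd : 1 ≤ d) (v : ℤ × ℤ) : 0 ≤ f1 d v := Qform_nonneg hd _ _

lemma f1_finite {d : ℕ} (hd : 1 ≤ d) (k : ℕ) : (levelSet (f1 d) k).Finite :=
  affine_level_finite hd (by norm_num) (by norm_num) 0 0 k

lemma part5 (d : ℕ) (hd : 1 ≤ d) (k : ℕ) :
    (levelSet (f1 d) k).ncard =
      ∑ b ∈ Finset.range 5, (levelSet (cfun d 0 (b : ℤ)) k).ncard := by
  have hun : levelSet (f1 d) k =
      ⋃ b ∈ Finset.range 5,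
        ((fun mn : ℤ × ℤ => (mn.1, 5 * mn.2 + (b : ℤ))) '' levelSet (cfun d 0 (b : ℤ)) k) := by
    ext v
    simp only [levelSet, Set.mem_setOf_eq, Set.mem_iUnion, Set.mem_image, Finset.mem_range]
    constructor
    · intro hv
      refine ⟨(v.2 % 5).toNat, by omega, (v.1, v.2 / 5), ?_, ?_⟩
      · show cfun d 0 _ _ = (k : ℤ)
        unfold cfun f1 at *
        have e2 : ((5:ℕ):ℤ) * (v.2 / 5) + (((v.2 % 5).toNat : ℕ) : ℤ) = 1 * v.2 + 0 := by
          push_cast; omega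
        rw [e2]
        exact hv
      · have e : 5 * (v.2 / 5) + (((v.2 % 5).toNat : ℕ) : ℤ) = v.2 := by omega
        show (v.1, 5 * (v.2 / 5) + _) = v
        rw [e]
    · rintro ⟨b, hb, ⟨m, n⟩, hmn, rfl⟩
      show f1 d (m, 5 * n + (b:ℤ)) = (k : ℤ)
      unfold f1
      unfold cfun at hmn
      have e2 : (1:ℤ) * (5 * n + (b:ℤ)) + 0 = ((5:ℕ):ℤ) * n + (b:ℤ) := by push_cast; ring
      rw [e2]
      exact hmn
  rw [hun, ncard_biUnion]
  · refine Finset.sum_congr rfl fun b _ => ?_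
    apply Set.ncard_image_of_injective
    intro u v h
    simp only [Prod.mk.injEq] at h
    exact Prod.ext (by omega) (by omega)
  · intro b _
    exact Set.Finite.image _ (cfun_finite hd 0 _ k)
  · intro i hi j hj hij
    rw [Set.disjoint_left]
    rintro v ⟨⟨m, n⟩, _, rfl⟩ ⟨⟨m', n'⟩, _, h⟩
    simp only [Prod.mk.injEq] at h
    simp only [Finset.mem_range] at hi hj
    apply hij
    omega

lemma theta_f1 (d : ℕ) (hd : 1 ≤ d) :
    thetaOf (f1 d) = ∑ b ∈ Finset.range 5, cosetTheta 5 d 0 (b : ℤ) := by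
  ext k
  rw [map_sum]
  simp only [thetaOf, cosetTheta, PowerSeries.coeff_mk]
  rw [← Nat.cast_sum]
  exact_mod_cast congrArg (Nat.cast : ℕ → ℤ) (part5 d hd k)

end Aux
namespace Aux
open Set

def SSfun (d : ℕ) (a b : ℕ) : (ℤ × ℤ) × (ℤ × ℤ) → ℤ :=
  fun w => cfun d (a : ℤ) (b : ℤ) w.1 + cfun d (2 * (a : ℤ)) (2 * (b : ℤ)) w.2

def F2 (d : ℕ) : (ℤ × ℤ) × (ℤ × ℤ) → ℤ :=
  fun w => Qform d w.1.1 w.1.2 +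
    Qform d (2 * w.1.1 + 5 * w.2.1) (2 * w.1.2 + 5 * w.2.2)

lemma SS_theta (d : ℕ) (hd : 1 ≤ d) (a b : ℕ) :
    thetaOf (SSfun d a b) =
      cosetTheta 5 d (a : ℤ) (b : ℤ) * cosetTheta 5 d (2 * (a : ℤ)) (2 * (b : ℤ)) := by
  rw [← thetaOf_cfun, ← thetaOf_cfun,
    theta_mul _ _ (cfun_nonneg hd _ _) (cfun_nonneg hd _ _) (cfun_finite hd _ _)
      (cfun_finite hd _ _)]
  rfl

lemma SSfun_finite {d : ℕ} (hd : 1 ≤ d) (a b : ℕ) (k : ℕ) :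
    (levelSet (SSfun d a b) k).Finite :=
  sum_level_finite _ _ (cfun_nonneg hd _ _) (cfun_nonneg hd _ _) (cfun_finite hd _ _)
    (cfun_finite hd _ _) k

lemma part25 (d : ℕ) (hd : 1 ≤ d) (k : ℕ) :
    (levelSet (F2 d) k).ncard =
      ∑ p ∈ Finset.range 5 ×ˢ Finset.range 5, (levelSet (SSfun d p.1 p.2) k).ncard := by
  have hun : levelSet (F2 d) k =
      ⋃ p ∈ Finset.range 5 ×ˢ Finset.range 5,
        ((fun w : (ℤ × ℤ) × (ℤ × ℤ) =>
            ((5 * w.1.1 + (p.1 : ℤ), 5 * w.1.2 + (p.2 : ℤ)),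
             (w.2.1 - 2 * w.1.1, w.2.2 - 2 * w.1.2))) ''
          levelSet (SSfun d p.1 p.2) k) := by
    ext w
    obtain ⟨⟨x, y⟩, u, v⟩ := w
    simp only [levelSet, Set.mem_setOf_eq, Set.mem_iUnion, Set.mem_image,
      Finset.mem_product, Finset.mem_range]
    constructor
    · intro hv
      refine ⟨((x % 5).toNat, (y % 5).toNat), ⟨by omega, by omega⟩,
        ((x / 5, y / 5), (u + 2 * (x / 5), v + 2 * (y / 5))), ?_, ?_⟩
      · show SSfun d _ _ _ = (k : ℤ)
        unfold SSfun cfun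
        unfold F2 at hv
        have ea : ((5:ℕ):ℤ) * (x / 5) + (((x % 5).toNat : ℕ) : ℤ) = x := by push_cast; omega
        have eb : ((5:ℕ):ℤ) * (y / 5) + (((y % 5).toNat : ℕ) : ℤ) = y := by push_cast; omega
        have ec : ((5:ℕ):ℤ) * (u + 2 * (x / 5)) + 2 * (((x % 5).toNat : ℕ) : ℤ) =
            2 * x + 5 * u := by push_cast; omega
        have ed : ((5:ℕ):ℤ) * (v + 2 * (y / 5)) + 2 * (((y % 5).toNat : ℕ) : ℤ) =
            2 * y + 5 * v := by push_cast; omega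
        simp only []
        rw [ea, eb, ec, ed]
        exact hv
      · simp only [Prod.mk.injEq]
        refine ⟨⟨by omega, by omega⟩, by omega, by omega⟩
    · rintro ⟨p, ⟨hp1, hp2⟩, ⟨⟨m, n⟩, ⟨s, t⟩⟩, hww, heq⟩
      rw [← heq]
      show F2 d _ = (k : ℤ)
      unfold F2
      unfold SSfun cfun at hww
      simp only [] at hww ⊢
      have ec : 2 * (((5:ℕ):ℤ) * m + (p.1 : ℤ)) + 5 * (s - 2 * m) = ((5:ℕ):ℤ) * s + 2 * (p.1 : ℤ) := by
        push_cast; ring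
      have ed : 2 * (((5:ℕ):ℤ) * n + (p.2 : ℤ)) + 5 * (t - 2 * n) = ((5:ℕ):ℤ) * t + 2 * (p.2 : ℤ) := by
        push_cast; ring
      have ea : (5 : ℤ) * m + (p.1 : ℤ) = ((5:ℕ):ℤ) * m + (p.1 : ℤ) := by push_cast; ring
      have eb : (5 : ℤ) * n + (p.2 : ℤ) = ((5:ℕ):ℤ) * n + (p.2 : ℤ) := by push_cast; ring
      rw [ea, eb, ec, ed]
      exact hww
  rw [hun, ncard_biUnion]
  · refine Finset.sum_congr rfl fun p _ => ?_
    apply Set.ncard_image_of_injective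
    intro w w' h
    simp only [Prod.mk.injEq] at h
    obtain ⟨⟨h1, h2⟩, h3, h4⟩ := h
    refine Prod.ext (Prod.ext (by omega) (by omega)) (Prod.ext (by omega) (by omega))
  · intro p _
    exact Set.Finite.image _ (SSfun_finite hd p.1 p.2 k)
  · intro p hp q hq hpq
    simp only [Finset.mem_product, Finset.mem_range] at hp hq
    rw [Set.disjoint_left]
    rintro w ⟨⟨⟨m, n⟩, ⟨s, t⟩⟩, _, rfl⟩ ⟨⟨⟨m', n'⟩, ⟨s', t'⟩⟩, _, h⟩
    simp only [Prod.mk.injEq] at h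
    obtain ⟨⟨h1, h2⟩, _, _⟩ := h
    apply hpq
    exact Prod.ext (by omega) (by omega)

lemma theta_F2 (d : ℕ) (hd : 1 ≤ d) :
    thetaOf (F2 d) =
      ∑ p ∈ Finset.range 5 ×ˢ Finset.range 5, thetaOf (SSfun d p.1 p.2) := by
  ext k
  rw [map_sum]
  simp only [thetaOf, PowerSeries.coeff_mk]
  rw [← Nat.cast_sum]
  exact_mod_cast congrArg (Nat.cast : ℕ → ℤ) (part25 d hd k)

end Aux
namespace Aux
open Set

def F1 (d : ℕ) : (ℤ × ℤ) × (ℤ × ℤ) → ℤ := fun w => f1 d w.1 + f1 d w.2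

def phi : (ℤ × ℤ) × (ℤ × ℤ) → (ℤ × ℤ) × (ℤ × ℤ) :=
  fun w => ((-2 * w.1.1 - 2 * w.1.2 - w.2.1 - w.2.2, 2 * w.1.1 + w.2.1),
            (w.1.1 + w.1.2, -w.1.1))

lemma theta_F1_eq_F2 : thetaOf (F1 5) = thetaOf (F2 5) := by
  ext k
  simp only [thetaOf, PowerSeries.coeff_mk, Nat.cast_inj]
  refine (ncard_congr_im phi ?_ ?_).symm
  · intro w w' h
    unfold phi at h
    simp only [Prod.mk.injEq] at h
    obtain ⟨⟨h1, h2⟩, h3, h4⟩ := h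
    refine Prod.ext (Prod.ext (by omega) (by omega)) (Prod.ext (by omega) (by omega))
  · ext w
    constructor
    · rintro ⟨v, hv, rfl⟩
      simp only [levelSet, Set.mem_setOf_eq] at hv ⊢
      unfold F1 f1 at hv
      unfold F2 phi Qform
      unfold Qform at hv
      push_cast at hv ⊢
      linear_combination hv
    · intro hw
      simp only [levelSet, Set.mem_setOf_eq] at hw
      refine ⟨((-w.2.2, w.2.1 + w.2.2),
               (w.1.2 + 2 * w.2.2, -w.1.1 - w.1.2 - 2 * w.2.1 - 2 * w.2.2)), ?_, ?_⟩
      · simp only [levelSet, Set.mem_setOf_eq]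
        unfold F2 Qform at hw
        unfold F1 f1 Qform
        push_cast at hw ⊢
        linear_combination hw
      · unfold phi
        refine Prod.ext (Prod.ext (by simp only [phi]; ring) (by simp only [phi]; ring)) (Prod.ext (by simp only [phi]; ring) (by simp only [phi]; ring))

end Aux
namespace Aux
open Set

lemma rhs_eq (d : ℕ) (h5 : 1 ≤ d) : MvPolynomial.aeval (T5 d) P2 = thetaOf (F2 d) := by
  have r03 : cosetTheta 5 d 0 3 = cosetTheta 5 d 0 2 :=
    (negg d 0 3).trans (translate d (-0) (-3) 0 2 (0) (-1) (by norm_num) (by norm_num))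
  have r04 : cosetTheta 5 d 0 4 = cosetTheta 5 d 0 1 :=
    (negg d 0 4).trans (translate d (-0) (-4) 0 1 (0) (-1) (by norm_num) (by norm_num))
  have r14 : cosetTheta 5 d 1 4 = cosetTheta 5 d 0 1 :=
    (shear d 1 4).trans (translate d (1+4) (-4) 0 1 (1) (-1) (by norm_num) (by norm_num))
  have r23 : cosetTheta 5 d 2 3 = cosetTheta 5 d 0 2 :=
    (shear d 2 3).trans (translate d (2+3) (-3) 0 2 (1) (-1) (by norm_num) (by norm_num))
  have r24 : cosetTheta 5 d 2 4 = cosetTheta 5 d 1 1 :=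
    (shear d 2 4).trans (translate d (2+4) (-4) 1 1 (1) (-1) (by norm_num) (by norm_num))
  have r30 : cosetTheta 5 d 3 0 = cosetTheta 5 d 2 0 :=
    (negg d 3 0).trans (translate d (-3) (-0) 2 0 (-1) (0) (by norm_num) (by norm_num))
  have r33 : cosetTheta 5 d 3 3 = cosetTheta 5 d 1 2 :=
    (shear d 3 3).trans (translate d (3+3) (-3) 1 2 (1) (-1) (by norm_num) (by norm_num))
  have r34 : cosetTheta 5 d 3 4 = cosetTheta 5 d 2 1 :=
    (negg d 3 4).trans (translate d (-3) (-4) 2 1 (-1) (-1) (by norm_num) (by norm_num))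
  have r40 : cosetTheta 5 d 4 0 = cosetTheta 5 d 1 0 :=
    (negg d 4 0).trans (translate d (-4) (-0) 1 0 (-1) (0) (by norm_num) (by norm_num))
  have r42 : cosetTheta 5 d 4 2 = cosetTheta 5 d 1 3 :=
    (negg d 4 2).trans (translate d (-4) (-2) 1 3 (-1) (-1) (by norm_num) (by norm_num))
  have r43 : cosetTheta 5 d 4 3 = cosetTheta 5 d 1 2 :=
    (negg d 4 3).trans (translate d (-4) (-3) 1 2 (-1) (-1) (by norm_num) (by norm_num))
  have r44 : cosetTheta 5 d 4 4 = cosetTheta 5 d 1 1 :=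
    (negg d 4 4).trans (translate d (-4) (-4) 1 1 (-1) (-1) (by norm_num) (by norm_num))
  have r22 : cosetTheta 5 d 2 2 = cosetTheta 5 d 1 2 :=
    (shear d 2 2).trans (translate d (2+2) (-2) 4 3 (0) (-1) (by norm_num) (by norm_num)) |>.trans r43
  have r31 : cosetTheta 5 d 3 1 = cosetTheta 5 d 1 1 :=
    (negg d 3 1).trans (translate d (-3) (-1) 2 4 (-1) (-1) (by norm_num) (by norm_num)) |>.trans r24
  have r32 : cosetTheta 5 d 3 2 = cosetTheta 5 d 0 2 :=
    (negg d 3 2).trans (translate d (-3) (-2) 2 3 (-1) (-1) (by norm_num) (by norm_num)) |>.trans r23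
  have r41 : cosetTheta 5 d 4 1 = cosetTheta 5 d 0 1 :=
    (negg d 4 1).trans (translate d (-4) (-1) 1 4 (-1) (-1) (by norm_num) (by norm_num)) |>.trans r14
  have r06 : cosetTheta 5 d 0 6 = cosetTheta 5 d 0 1 :=
    translate d 0 6 0 1 (0) (1) (by norm_num) (by norm_num)
  have r08 : cosetTheta 5 d 0 8 = cosetTheta 5 d 0 2 :=
    (translate d 0 8 0 3 (0) (1) (by norm_num) (by norm_num)) |>.trans r03
  have r26 : cosetTheta 5 d 2 6 = cosetTheta 5 d 2 1 :=
    translate d 2 6 2 1 (0) (1) (by norm_num) (by norm_num)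
  have r28 : cosetTheta 5 d 2 8 = cosetTheta 5 d 0 2 :=
    (translate d 2 8 2 3 (0) (1) (by norm_num) (by norm_num)) |>.trans r23
  have r46 : cosetTheta 5 d 4 6 = cosetTheta 5 d 0 1 :=
    (translate d 4 6 4 1 (0) (1) (by norm_num) (by norm_num)) |>.trans r41
  have r48 : cosetTheta 5 d 4 8 = cosetTheta 5 d 1 2 :=
    (translate d 4 8 4 3 (0) (1) (by norm_num) (by norm_num)) |>.trans r43
  have r60 : cosetTheta 5 d 6 0 = cosetTheta 5 d 1 0 :=
    translate d 6 0 1 0 (1) (0) (by norm_num) (by norm_num)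
  have r62 : cosetTheta 5 d 6 2 = cosetTheta 5 d 1 2 :=
    translate d 6 2 1 2 (1) (0) (by norm_num) (by norm_num)
  have r64 : cosetTheta 5 d 6 4 = cosetTheta 5 d 0 1 :=
    (translate d 6 4 1 4 (1) (0) (by norm_num) (by norm_num)) |>.trans r14
  have r66 : cosetTheta 5 d 6 6 = cosetTheta 5 d 1 1 :=
    translate d 6 6 1 1 (1) (1) (by norm_num) (by norm_num)
  have r68 : cosetTheta 5 d 6 8 = cosetTheta 5 d 1 3 :=
    translate d 6 8 1 3 (1) (1) (by norm_num) (by norm_num)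
  have r80 : cosetTheta 5 d 8 0 = cosetTheta 5 d 2 0 :=
    (translate d 8 0 3 0 (1) (0) (by norm_num) (by norm_num)) |>.trans r30
  have r82 : cosetTheta 5 d 8 2 = cosetTheta 5 d 0 2 :=
    (translate d 8 2 3 2 (1) (0) (by norm_num) (by norm_num)) |>.trans r32
  have r84 : cosetTheta 5 d 8 4 = cosetTheta 5 d 2 1 :=
    (translate d 8 4 3 4 (1) (0) (by norm_num) (by norm_num)) |>.trans r34
  have r86 : cosetTheta 5 d 8 6 = cosetTheta 5 d 1 1 :=
    (translate d 8 6 3 1 (1) (1) (by norm_num) (by norm_num)) |>.trans r31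
  have r88 : cosetTheta 5 d 8 8 = cosetTheta 5 d 1 2 :=
    (translate d 8 8 3 3 (1) (1) (by norm_num) (by norm_num)) |>.trans r33
  have ht0 : T5 d 0 = cosetTheta 5 d 0 0 := rfl
  have ht1 : T5 d 1 = cosetTheta 5 d 1 0 := rfl
  have ht2 : T5 d 2 = cosetTheta 5 d 0 1 := rfl
  have ht3 : T5 d 3 = cosetTheta 5 d 1 1 := rfl
  have ht4 : T5 d 4 = cosetTheta 5 d 0 2 := rfl
  have ht5 : T5 d 5 = cosetTheta 5 d 2 0 := rfl
  have ht6 : T5 d 6 = cosetTheta 5 d 2 1 := rfl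
  have ht7 : T5 d 7 = cosetTheta 5 d 1 2 := rfl
  have ht8 : T5 d 8 = cosetTheta 5 d 1 3 := rfl
  rw [theta_F2 d h5, Finset.sum_product]
  simp only [Finset.sum_range_succ, Finset.sum_range_zero, zero_add]
  rw [SS_theta d h5 0 0]
  rw [SS_theta d h5 0 1]
  rw [SS_theta d h5 0 2]
  rw [SS_theta d h5 0 3]
  rw [SS_theta d h5 0 4]
  rw [SS_theta d h5 1 0]
  rw [SS_theta d h5 1 1]
  rw [SS_theta d h5 1 2]
  rw [SS_theta d h5 1 3]
  rw [SS_theta d h5 1 4]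
  rw [SS_theta d h5 2 0]
  rw [SS_theta d h5 2 1]
  rw [SS_theta d h5 2 2]
  rw [SS_theta d h5 2 3]
  rw [SS_theta d h5 2 4]
  rw [SS_theta d h5 3 0]
  rw [SS_theta d h5 3 1]
  rw [SS_theta d h5 3 2]
  rw [SS_theta d h5 3 3]
  rw [SS_theta d h5 3 4]
  rw [SS_theta d h5 4 0]
  rw [SS_theta d h5 4 1]
  rw [SS_theta d h5 4 2]
  rw [SS_theta d h5 4 3]
  rw [SS_theta d h5 4 4]
  simp only [P2, map_add, map_mul, map_pow, map_ofNat, MvPolynomial.aeval_X,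
    ht0, ht1, ht2, ht3, ht4, ht5, ht6, ht7, ht8]
  push_cast
  norm_num
  rw [r03, r04, r14, r23, r24, r30, r33, r34, r40, r42, r43, r44, r22, r31, r32, r41, r06, r08, r26, r28, r46, r48, r60, r62, r64, r66, r68, r80, r82, r84, r86, r88]
  ring

end Aux
namespace Aux
open Set

lemma lhs_eq (d : ℕ) (h5 : 1 ≤ d) : MvPolynomial.aeval (T5 d) P1 = thetaOf (F1 d) := by
  have r03 : cosetTheta 5 d 0 3 = cosetTheta 5 d 0 2 :=
    (negg d 0 3).trans (translate d (-0) (-3) 0 2 (0) (-1) (by norm_num) (by norm_num))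
  have r04 : cosetTheta 5 d 0 4 = cosetTheta 5 d 0 1 :=
    (negg d 0 4).trans (translate d (-0) (-4) 0 1 (0) (-1) (by norm_num) (by norm_num))
  have ht0 : T5 d 0 = cosetTheta 5 d 0 0 := rfl
  have ht2 : T5 d 2 = cosetTheta 5 d 0 1 := rfl
  have ht4 : T5 d 4 = cosetTheta 5 d 0 2 := rfl
  have hprod : thetaOf (F1 d) = thetaOf (f1 d) * thetaOf (f1 d) := by
    rw [theta_mul (f1 d) (f1 d) (f1_nonneg h5) (f1_nonneg h5) (f1_finite h5) (f1_finite h5)]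
    rfl
  have hsum : thetaOf (f1 d) =
      cosetTheta 5 d 0 0 + 2 * cosetTheta 5 d 0 1 + 2 * cosetTheta 5 d 0 2 := by
    rw [theta_f1 d h5]
    simp only [Finset.sum_range_succ, Finset.sum_range_zero, zero_add]
    push_cast
    rw [r03, r04]
    ring
  simp only [P1, map_add, map_mul, map_pow, map_ofNat, MvPolynomial.aeval_X, ht0, ht2, ht4]
  rw [hprod, hsum]
  ring

lemma part2 : MvPolynomial.aeval (T5 5) P1 = MvPolynomial.aeval (T5 5) P2 :=
  (lhs_eq 5 (by norm_num)).trans (theta_F1_eq_F2.trans (rhs_eq 5 (by norm_num)).symm)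

end Aux
namespace Aux
open Set

lemma small10 (x y : ℤ) (c : ℤ) (hc : c ≤ 5) (h : Qform 10 x y = c) :
    y = 0 ∧ x ^ 2 = c := by
  unfold Qform at h
  push_cast at h
  have hy : y = 0 := by
    rcases eq_or_ne y 0 with h0 | h0
    · exact h0
    · exfalso
      have h1 : 1 ≤ y ^ 2 := by
        rcases lt_or_gt_of_ne h0 with hl | hl <;> nlinarith
      nlinarith [sq_nonneg (2 * x + y)]
  subst hy
  constructor
  · rfl
  · linear_combination h

lemma sq_zero_of_nonpos {n : ℤ} (h : n ^ 2 ≤ 0) : n = 0 := by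
  nlinarith [sq_nonneg n, sq_abs n, abs_nonneg n]

lemma F1_10_empty : levelSet (F1 10) 5 = ∅ := by
  ext w
  obtain ⟨⟨m1, n1⟩, ⟨m2, n2⟩⟩ := w
  simp only [levelSet, Set.mem_setOf_eq, Set.mem_empty_iff_false, iff_false]
  intro h
  unfold F1 f1 Qform at h
  push_cast at h
  have e1 : n1 = 0 := by
    apply sq_zero_of_nonpos
    nlinarith [sq_nonneg (10 * m1 + n1), sq_nonneg (10 * m2 + n2), sq_nonneg n2]
  have e2 : n2 = 0 := by
    apply sq_zero_of_nonpos
    nlinarith [sq_nonneg (10 * m1 + n1), sq_nonneg (10 * m2 + n2), sq_nonneg n1]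
  subst e1 e2
  have f1' : m1 = 0 := by
    apply sq_zero_of_nonpos
    nlinarith [sq_nonneg m2]
  have f2' : m2 = 0 := by
    apply sq_zero_of_nonpos
    nlinarith [sq_nonneg m1]
  subst f1' f2'
  norm_num at h

lemma F2_10_set : levelSet (F2 10) 5 =
    ({((1, 0), (0, 0)), ((-1, 0), (0, 0)), ((2, 0), (-1, 0)), ((-2, 0), (1, 0))} :
      Set ((ℤ × ℤ) × (ℤ × ℤ))) := by
  ext ⟨⟨a, b⟩, u, v⟩
  simp only [levelSet, Set.mem_setOf_eq, Set.mem_insert_iff, Set.mem_singleton_iff,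
    Prod.mk.injEq]
  constructor
  · intro h
    unfold F2 at h
    simp only [] at h
    have h1 : 0 ≤ Qform 10 a b := Qform_nonneg (by norm_num) _ _
    have h2 : 0 ≤ Qform 10 (2 * a + 5 * u) (2 * b + 5 * v) := Qform_nonneg (by norm_num) _ _
    obtain ⟨hb, ha2⟩ := small10 a b _ (by omega) rfl
    obtain ⟨hv, hz2⟩ := small10 (2 * a + 5 * u) (2 * b + 5 * v) _ (by omega) rfl
    rw [← ha2, ← hz2] at h
    push_cast at h
    have hv0 : v = 0 := by omega
    subst hb hv0
    have hab : -2 ≤ a ∧ a ≤ 2 := by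
      constructor <;> nlinarith [sq_nonneg (2 * a + 5 * u)]
    have hz : -2 ≤ 2 * a + 5 * u ∧ 2 * a + 5 * u ≤ 2 := by
      constructor <;> nlinarith [sq_nonneg a]
    obtain ⟨ha1, ha2'⟩ := hab
    obtain ⟨hz1, hz2'⟩ := hz
    have hu : -1 ≤ u ∧ u ≤ 1 := by omega
    obtain ⟨hu1, hu2⟩ := hu
    interval_cases a <;> interval_cases u <;> (revert h; norm_num)
  · rintro (⟨⟨rfl, rfl⟩, rfl, rfl⟩ | ⟨⟨rfl, rfl⟩, rfl, rfl⟩ |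
      ⟨⟨rfl, rfl⟩, rfl, rfl⟩ | ⟨⟨rfl, rfl⟩, rfl, rfl⟩) <;>
      (show F2 10 _ = _ ; unfold F2 Qform ; norm_num)

lemma part3 : MvPolynomial.aeval (T5 10) P1 ≠ MvPolynomial.aeval (T5 10) P2 := by
  rw [lhs_eq 10 (by norm_num), rhs_eq 10 (by norm_num)]
  intro h
  have hco := congrArg (PowerSeries.coeff 5) h
  simp only [thetaOf, PowerSeries.coeff_mk] at hco
  rw [F1_10_empty, F2_10_set] at hco
  have h4 : (({((1, 0), (0, 0)), ((-1, 0), (0, 0)), ((2, 0), (-1, 0)), ((-2, 0), (1, 0))} :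
      Set ((ℤ × ℤ) × (ℤ × ℤ)))).ncard = 4 := by
    rw [Set.ncard_insert_of_notMem (by norm_num), Set.ncard_insert_of_notMem (by norm_num),
      Set.ncard_insert_of_notMem (by norm_num), Set.ncard_singleton]
  rw [h4] at hco
  simp at hco

end Aux
namespace Aux

lemma part1 : P1 ≠ P2 := by
  intro h
  have h2 := congrArg (MvPolynomial.eval (fun i : Fin 9 => if i = 2 then (1:ℤ) else 0)) h
  simp [P1, P2] at h2

end Aux

theorem stmt18 :
    P1 ≠ P2 ∧
    MvPolynomial.aeval (T5 5) P1 = MvPolynomial.aeval (T5 5) P2 ∧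
    MvPolynomial.aeval (T5 10) P1 ≠ MvPolynomial.aeval (T5 10) P2 := by
  exact ⟨Aux.part1, Aux.part2, Aux.part3⟩
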